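/- Let N(X) denote the number of pairs of integers (A, B) that are weakly minimal (no prime p satisfies p⁴ ∣ A and p⁶ ∣ B), satisfy 4A³ + 27B² ≠ 0, and satisfy max(B², |A|³) < X. Then N(X) = 4·ζ(10)^{−1}·X^{5/6} + O(X^{1/2}); precisely, there exists a constant K > 0 such that for all real X ≥ 1, |N(X) − 4ζ(10)^{−1} X^{5/6}| ≤ K·X^{1/2}. -/

import Mathlib

open Finset ArithmeticFunction

/-- `ζ(10)`, the value of the Riemann zeta function at `10`, as a positive real
number: `ζ(10) = ∑_{n ≥ 1} n^{-10}` (the `n = 0` term below is `0`). -/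
noncomputable def zetaTen : ℝ := ∑' n : ℕ, ((n : ℝ) ^ 10)⁻¹

/-- A pair of integers `(A, B)` is weakly minimal if no prime `p` satisfies
`p⁴ ∣ A` and `p⁶ ∣ B`. -/
def WeaklyMinimal (A B : ℤ) : Prop :=
  ∀ p : ℕ, p.Prime → ¬((p : ℤ) ^ 4 ∣ A ∧ (p : ℤ) ^ 6 ∣ B)

lemma summable_ten : Summable (fun n : ℕ => ((n : ℝ) ^ 10)⁻¹) := by
  simpa [one_div] using Real.summable_one_div_nat_pow.mpr (by norm_num : 1 < 10)

noncomputable def muS : ℝ := ∑' n : ℕ, (moebius n : ℝ) / (n : ℝ) ^ 10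

lemma abs_mu_term_le (n : ℕ) : |(moebius n : ℝ) / (n : ℝ) ^ 10| ≤ ((n : ℝ) ^ 10)⁻¹ := by
  rcases eq_or_ne n 0 with rfl | hn
  · simp
  · rw [abs_div, abs_pow, Nat.abs_cast, div_le_iff₀ (by positivity), inv_mul_cancel₀ (by positivity)]
    have := abs_moebius_le_one (n := n)
    exact_mod_cast (by exact_mod_cast this : |(moebius n : ℝ)| ≤ 1)

lemma summable_mu : Summable (fun n : ℕ => (moebius n : ℝ) / (n : ℝ) ^ 10) := by
  refine Summable.of_abs (Summable.of_nonneg_of_le (fun n => abs_nonneg _) abs_mu_term_le summable_ten)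

lemma zetaTen_complex : (zetaTen : ℂ) = LSeries 1 10 := by
  rw [zetaTen, Complex.ofReal_tsum, LSeries]
  refine tsum_congr fun n => ?_
  rcases eq_or_ne n 0 with rfl | hn
  · simp [LSeries.term]
  · rw [LSeries.term_of_ne_zero hn]
    have : (n : ℂ) ^ (10 : ℂ) = (n : ℂ) ^ (10 : ℕ) := by
      exact_mod_cast Complex.cpow_natCast (n : ℂ) 10
    rw [this, Pi.one_apply]
    push_cast
    rw [one_div]

lemma muS_complex : (muS : ℂ) = LSeries (fun n => (moebius n : ℂ)) 10 := by
  rw [muS, Complex.ofReal_tsum, LSeries]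
  refine tsum_congr fun n => ?_
  rcases eq_or_ne n 0 with rfl | hn
  · simp [LSeries.term]
  · rw [LSeries.term_of_ne_zero hn]
    have : (n : ℂ) ^ (10 : ℂ) = (n : ℂ) ^ (10 : ℕ) := by
      exact_mod_cast Complex.cpow_natCast (n : ℂ) 10
    rw [this]
    push_cast
    ring

lemma zetaTen_mul_muS : zetaTen * muS = 1 := by
  have h10 : (1 : ℝ) < (10 : ℂ).re := by norm_num
  have := DirichletCharacter.LSeries.mul_mu_eq_one (1 : DirichletCharacter ℂ 1) h10
  rw [DirichletCharacter.modOne_eq_one (χ := (1 : DirichletCharacter ℂ 1))] at this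
  rw [one_mul] at this
  have : (zetaTen : ℂ) * (muS : ℂ) = 1 := by
    rw [zetaTen_complex, muS_complex]; exact this
  exact_mod_cast this

lemma zetaTen_pos : 0 < zetaTen := by
  have h1 : ((1:ℕ) : ℝ) ^ 10 = 1 := by norm_num
  have := Summable.le_tsum summable_ten 1 (fun j _ => by positivity)
  rw [h1] at this
  simp only [inv_one] at this
  exact lt_of_lt_of_le one_pos this

lemma muS_eq : muS = zetaTen⁻¹ := by
  have h := zetaTen_mul_muS
  field_simp [ne_of_gt zetaTen_pos] at h ⊢
  linarith [h]


lemma muS_tsum : (∑' n : ℕ, (ArithmeticFunction.moebius n : ℝ) / (n : ℝ) ^ 10) = zetaTen⁻¹ := muS_eq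

lemma sum_sq_range (N : ℕ) : ∑ i ∈ range N, (((i : ℝ) + 1) ^ 2)⁻¹ ≤ 2 - 2 / ((N : ℝ) + 1) := by
  induction N with
  | zero => norm_num
  | succ n ih =>
    rw [Finset.sum_range_succ]
    push_cast
    have h1 : (0:ℝ) < (n:ℝ) + 1 := by positivity
    have h2 : (0:ℝ) < (n:ℝ) + 2 := by positivity
    have key : (((n:ℝ) + 1) ^ 2)⁻¹ ≤ 2 / ((n:ℝ) + 1) - 2 / ((n:ℝ) + 2) := by
      rw [div_sub_div _ _ (ne_of_gt h1) (ne_of_gt h2), inv_eq_one_div,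
        div_le_div_iff₀ (by positivity) (by positivity)]
      nlinarith [sq_nonneg ((n:ℝ))]
    have := add_le_add ih key
    calc ∑ i ∈ range n, (((i : ℝ) + 1) ^ 2)⁻¹ + (((n:ℝ) + 1) ^ 2)⁻¹
        ≤ 2 - 2 / ((n : ℝ) + 1) + (2 / ((n:ℝ) + 1) - 2 / ((n:ℝ) + 2)) := this
      _ = 2 - 2 / ((n:ℝ) + 1 + 1) := by ring_nf
  
lemma B2_summable : Summable (fun n : ℕ => (((n : ℝ) + 1) ^ 2)⁻¹) := by
  have := (Real.summable_one_div_nat_pow.mpr (by norm_num : 1 < 2)).comp_injective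
    (add_right_injective 1)
  refine this.congr fun n => ?_
  simp [one_div, Function.comp]
  ring_nf

lemma B2_le : ∑' n : ℕ, (((n : ℝ) + 1) ^ 2)⁻¹ ≤ 2 := by
  refine Summable.tsum_le_of_sum_range_le B2_summable fun n => ?_
  calc ∑ i ∈ range n, (((i : ℝ) + 1) ^ 2)⁻¹ ≤ 2 - 2 / ((n : ℝ) + 1) := sum_sq_range n
    _ ≤ 2 := by
        have : (0:ℝ) < (n:ℝ) + 1 := by positivity
        have : 0 ≤ 2 / ((n:ℝ)+1) := by positivity
        linarith

lemma sum_sq_Icc (T : ℕ) : ∑ d ∈ Icc 1 T, ((d : ℝ) ^ 2)⁻¹ ≤ 2 - 2 / ((T : ℝ) + 1) := by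
  induction T with
  | zero => simp
  | succ n ih =>
    rw [Finset.sum_Icc_succ_top (by omega : 1 ≤ n + 1)]
    push_cast
    have h1 : (0:ℝ) < (n:ℝ) + 1 := by positivity
    have h2 : (0:ℝ) < (n:ℝ) + 2 := by positivity
    have key : (((n:ℝ) + 1) ^ 2)⁻¹ ≤ 2 / ((n:ℝ) + 1) - 2 / ((n:ℝ) + 2) := by
      rw [div_sub_div _ _ (ne_of_gt h1) (ne_of_gt h2), inv_eq_one_div,
        div_le_div_iff₀ (by positivity) (by positivity)]
      nlinarith [sq_nonneg ((n:ℝ))]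
    have := add_le_add ih key
    calc ∑ d ∈ Icc 1 n, ((d:ℝ)^2)⁻¹ + (((n:ℝ) + 1) ^ 2)⁻¹
        ≤ 2 - 2 / ((n : ℝ) + 1) + (2 / ((n:ℝ) + 1) - 2 / ((n:ℝ) + 2)) := this
      _ = 2 - 2 / ((n:ℝ) + 1 + 1) := by ring_nf

lemma sum_Icc_inv6 (T : ℕ) : ∑ d ∈ Icc 1 T, (((d : ℝ)) ^ 6)⁻¹ ≤ 2 := by
  have h1 : ∑ d ∈ Icc 1 T, (((d : ℝ)) ^ 6)⁻¹ ≤ ∑ d ∈ Icc 1 T, (((d : ℝ)) ^ 2)⁻¹ := by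
    refine Finset.sum_le_sum fun d hd => ?_
    have hd1 : 1 ≤ d := (Finset.mem_Icc.mp hd).1
    have : (1:ℝ) ≤ (d:ℝ) := by exact_mod_cast hd1
    have h2 : ((d:ℝ))^2 ≤ ((d:ℝ))^6 := pow_le_pow_right₀ this (by norm_num)
    exact inv_anti₀ (by positivity) h2
  have h3 : (0:ℝ) ≤ 2/((T:ℝ)+1) := by positivity
  have := sum_sq_Icc T
  linarith

lemma mu_tail (T : ℕ) (hT : 1 ≤ T) :
    |∑ d ∈ Icc 1 T, (moebius d : ℝ) / (d : ℝ) ^ 10 - zetaTen⁻¹| ≤ 2 / ((T : ℝ) + 1) ^ 8 := by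
  set f : ℕ → ℝ := fun n => (moebius n : ℝ) / (n : ℝ) ^ 10 with hf
  have key := Summable.sum_add_tsum_nat_add (f := f) (T+1) summable_mu
  have hsplit : ∑ i ∈ range (T+1), f i = ∑ d ∈ Icc 1 T, f d := by
    have : range (T+1) = insert 0 (Icc 1 T) := by
      ext x; simp [Finset.mem_insert, Finset.mem_range, Finset.mem_Icc]; omega
    rw [this, Finset.sum_insert (by simp)]
    have : f 0 = 0 := by simp [hf]
    rw [this, zero_add]
  have hbound : ∀ i : ℕ, |f (i + (T+1))| ≤ (((T:ℝ)+1)^8)⁻¹ * (((i:ℝ)+1)^2)⁻¹ := by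
    intro i
    refine (abs_mu_term_le _).trans ?_
    rw [← mul_inv]
    refine inv_anti₀ (by positivity) ?_
    push_cast
    calc ((T:ℝ)+1)^8 * ((i:ℝ)+1)^2 ≤ ((i:ℝ)+(T:ℝ)+1)^8 * ((i:ℝ)+(T:ℝ)+1)^2 := by
          refine mul_le_mul (pow_le_pow_left₀ (by positivity) (by linarith) 8)
            (pow_le_pow_left₀ (by positivity) (by linarith) 2) (by positivity) (by positivity)
      _ = ((i:ℝ)+((T:ℝ)+1))^10 := by ring
  have hg : Summable (fun i : ℕ => (((T:ℝ)+1)^8)⁻¹ * (((i:ℝ)+1)^2)⁻¹) :=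
    B2_summable.mul_left _
  have habs : Summable (fun i : ℕ => |f (i + (T+1))|) :=
    Summable.of_nonneg_of_le (fun i => abs_nonneg _) hbound hg
  have htail : |∑' i : ℕ, f (i + (T+1))| ≤ 2 / ((T:ℝ)+1)^8 := by
    calc |∑' i : ℕ, f (i + (T+1))| ≤ ∑' i : ℕ, |f (i + (T+1))| := by
          simpa using norm_tsum_le_tsum_norm (f := fun i => f (i + (T+1))) (by simpa using habs)
      _ ≤ ∑' i : ℕ, (((T:ℝ)+1)^8)⁻¹ * (((i:ℝ)+1)^2)⁻¹ := Summable.tsum_le_tsum hbound habs hg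
      _ = (((T:ℝ)+1)^8)⁻¹ * ∑' i : ℕ, (((i:ℝ)+1)^2)⁻¹ := tsum_mul_left
      _ ≤ (((T:ℝ)+1)^8)⁻¹ * 2 := by
          refine mul_le_mul_of_nonneg_left B2_le (by positivity)
      _ = 2 / ((T:ℝ)+1)^8 := by ring
  rw [← muS_tsum]
  have : ∑ d ∈ Icc 1 T, f d - (∑' n : ℕ, f n) = -(∑' i : ℕ, f (i + (T+1))) := by
    rw [← key, hsplit]; ring
  rw [show (∑' n : ℕ, (moebius n : ℝ) / (n : ℝ) ^ 10) = ∑' n : ℕ, f n from rfl, this, abs_neg]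
  exact htail

def okSet (X : ℝ) : Set (ℤ × ℤ) :=
  {p | 4 * p.1 ^ 3 + 27 * p.2 ^ 2 ≠ 0 ∧ max ((p.2 : ℝ) ^ 2) (|(p.1 : ℝ)| ^ 3) < X}

def minSet (X : ℝ) : Set (ℤ × ℤ) :=
  {p | WeaklyMinimal p.1 p.2 ∧ 4 * p.1 ^ 3 + 27 * p.2 ^ 2 ≠ 0 ∧
    max ((p.2 : ℝ) ^ 2) (|(p.1 : ℝ)| ^ 3) < X}

noncomputable def Mc (X : ℝ) : ℕ := Nat.card (okSet X)
noncomputable def Nc (X : ℝ) : ℕ := Nat.card (minSet X)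

/-- general cast lemma -/
lemma abs_pow_lt_iff {X : ℝ} (hX : 0 < X) {n : ℕ} (hn : n ≠ 0) (A : ℤ) :
    |(A : ℝ)| ^ n < X ↔ |A| ≤ ⌈X ^ (((n : ℝ))⁻¹)⌉ - 1 := by
  set c : ℝ := X ^ (((n : ℝ))⁻¹) with hc
  have hcpos : 0 < c := Real.rpow_pos_of_pos hX _
  have hcn : c ^ n = X := by
    rw [hc, ← Real.rpow_natCast (X ^ (((n : ℝ))⁻¹)) n, ← Real.rpow_mul hX.le]
    rw [inv_mul_cancel₀ (by exact_mod_cast hn), Real.rpow_one]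
  have h1 : |(A : ℝ)| ^ n < X ↔ |(A : ℝ)| < c := by
    rw [← hcn]
    exact pow_lt_pow_iff_left₀ (abs_nonneg _) hcpos.le hn
  rw [h1, ← Int.cast_abs, ← Int.lt_ceil]
  omega

lemma okSet_eq_finset (X : ℝ) (hX : 0 < X) :
    okSet X = ↑(((Finset.Icc (-(⌈X ^ ((3:ℝ))⁻¹⌉ - 1)) (⌈X ^ ((3:ℝ))⁻¹⌉ - 1)) ×ˢ
      (Finset.Icc (-(⌈X ^ ((2:ℝ))⁻¹⌉ - 1)) (⌈X ^ ((2:ℝ))⁻¹⌉ - 1))).filter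
      (fun p => 4 * p.1 ^ 3 + 27 * p.2 ^ 2 ≠ 0)) := by
  ext p
  simp only [okSet, Set.mem_setOf_eq, Finset.coe_filter, Finset.mem_product, Finset.mem_Icc,
    Set.mem_setOf_eq, max_lt_iff]
  have hA := abs_pow_lt_iff hX (by norm_num : (3:ℕ) ≠ 0) p.1
  have hB := abs_pow_lt_iff hX (by norm_num : (2:ℕ) ≠ 0) p.2
  rw [show ((3:ℕ):ℝ) = (3:ℝ) by norm_num] at hA
  rw [show ((2:ℕ):ℝ) = (2:ℝ) by norm_num] at hB
  constructor
  · rintro ⟨hne, hb, ha⟩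
    have h1 := (hA.mp ha); have h2 := (hB.mp (by rwa [← sq_abs] at hb))
    rw [abs_le] at h1 h2
    exact ⟨⟨⟨h1.1, h1.2⟩, ⟨h2.1, h2.2⟩⟩, hne⟩
  · rintro ⟨⟨⟨h1, h2⟩, ⟨h3, h4⟩⟩, hne⟩
    refine ⟨hne, ?_, hA.mpr (abs_le.mpr ⟨h1, h2⟩)⟩
    rw [← sq_abs]; exact hB.mpr (abs_le.mpr ⟨h3, h4⟩)

lemma okSet_empty {X : ℝ} (hX : X ≤ 1) : okSet X = ∅ := by
  ext p
  simp only [okSet, Set.mem_setOf_eq, Set.mem_empty_iff_false, iff_false, not_and]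
  intro hne hlt
  rw [max_lt_iff] at hlt
  obtain ⟨hb, ha⟩ := hlt
  have hB : p.2 = 0 := by
    by_contra h
    have h0 : (1:ℤ) ≤ p.2^2 := by
      have := Int.one_le_abs (by omega : p.2 ≠ 0)
      rw [← sq_abs]; nlinarith
    have : (1:ℝ) ≤ (p.2:ℝ)^2 := by exact_mod_cast h0
    linarith
  have hA : p.1 = 0 := by
    by_contra h
    rw [← Int.cast_abs] at ha
    have h1 : (1:ℤ) ≤ |p.1| := Int.one_le_abs (by omega)
    have h2 : (1:ℝ) ≤ ((|p.1|:ℤ):ℝ) := by exact_mod_cast h1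
    have h3 : (1:ℝ) ≤ ((|p.1|:ℤ):ℝ)^3 := one_le_pow₀ h2
    linarith
  rw [hA, hB] at hne
  simp at hne

lemma minSet_empty {X : ℝ} (hX : X ≤ 1) : minSet X = ∅ := by
  have h := okSet_empty hX
  ext p
  simp only [minSet, Set.mem_setOf_eq, Set.mem_empty_iff_false, iff_false]
  rintro ⟨_, hne, hlt⟩
  have : p ∈ okSet X := ⟨hne, hlt⟩
  rw [h] at this; exact this

lemma okSet_finite (X : ℝ) : (okSet X).Finite := by
  rcases le_or_gt X 0 with h | h
  · rw [okSet_empty (by linarith)]; exact Set.finite_empty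
  · rw [okSet_eq_finset X h]; exact (Finset.finite_toSet _)

lemma minSet_sub (X : ℝ) : minSet X ⊆ okSet X := fun p hp => ⟨hp.2.1, hp.2.2⟩

lemma minSet_finite (X : ℝ) : (minSet X).Finite := (okSet_finite X).subset (minSet_sub X)

set_option maxHeartbeats 1000000 in
lemma M_approx (X : ℝ) (hX : 0 < X) :
    |(Mc X : ℝ) - 4 * X ^ ((5:ℝ)/6)| ≤ 8 * X ^ ((1:ℝ)/2) := by
  rcases le_or_gt X 1 with h1 | h1
  · have : Mc X = 0 := by rw [Mc, okSet_empty h1]; simp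
    rw [this]
    have h2 : X ^ ((5:ℝ)/6) ≤ X ^ ((1:ℝ)/2) :=
      Real.rpow_le_rpow_of_exponent_ge hX h1 (by norm_num)
    have h3 : 0 < X ^ ((5:ℝ)/6) := Real.rpow_pos_of_pos hX _
    rw [abs_of_nonpos (by linarith), Nat.cast_zero]
    linarith
  · -- main case X > 1
    have hX1 : (1:ℝ) ≤ X := h1.le
    set a : ℤ := ⌈X ^ ((3:ℝ))⁻¹⌉ - 1 with ha
    set b : ℤ := ⌈X ^ ((2:ℝ))⁻¹⌉ - 1 with hb
    set α : ℝ := X ^ ((3:ℝ))⁻¹ with hα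
    set β : ℝ := X ^ ((2:ℝ))⁻¹ with hβ
    have hαpos : 0 < α := Real.rpow_pos_of_pos hX _
    have hβpos : 0 < β := Real.rpow_pos_of_pos hX _
    have hβ1 : 1 ≤ β := Real.one_le_rpow hX1 (by norm_num)
    have hαβ : α ≤ β := Real.rpow_le_rpow_of_exponent_le hX1 (by norm_num)
    have hab : α * β = X ^ ((5:ℝ)/6) := by
      rw [hα, hβ, ← Real.rpow_add hX]; norm_num
    have haR : α - 1 ≤ (a:ℝ) ∧ (a:ℝ) < α := by
      constructor
      · rw [ha]; push_cast; have := Int.le_ceil α; linarith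
      · rw [ha]; push_cast; have := Int.ceil_lt_add_one α; linarith
    have hbR : β - 1 ≤ (b:ℝ) ∧ (b:ℝ) < β := by
      constructor
      · rw [hb]; push_cast; have := Int.le_ceil β; linarith
      · rw [hb]; push_cast; have := Int.ceil_lt_add_one β; linarith
    have ha0 : 0 ≤ a := by
      have : (0:ℝ) < α := hαpos
      have h' : 0 < ⌈α⌉ := Int.ceil_pos.mpr this
      omega
    have hb0 : 0 ≤ b := by
      have h' : 0 < ⌈β⌉ := Int.ceil_pos.mpr hβpos
      omega
    -- cards
    have hcardA : ((Finset.Icc (-a) a).card : ℝ) = 2*(a:ℝ) + 1 := by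
      have h0 : (Finset.Icc (-a) a).card = (2*a+1).toNat := by rw [Int.card_Icc]; congr 1; ring
      rw [h0]
      have h2 : ((2*a+1).toNat : ℤ) = 2*a+1 := Int.toNat_of_nonneg (by omega)
      exact_mod_cast congrArg (fun z : ℤ => (z:ℝ)) h2
    have hcardB : ((Finset.Icc (-b) b).card : ℝ) = 2*(b:ℝ) + 1 := by
      have h0 : (Finset.Icc (-b) b).card = (2*b+1).toNat := by rw [Int.card_Icc]; congr 1; ring
      rw [h0]
      have h2 : ((2*b+1).toNat : ℤ) = 2*b+1 := Int.toNat_of_nonneg (by omega)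
      exact_mod_cast congrArg (fun z : ℤ => (z:ℝ)) h2
    set boxF := (Finset.Icc (-a) a) ×ˢ (Finset.Icc (-b) b) with hboxF
    classical
    set okF := boxF.filter (fun p : ℤ×ℤ => 4 * p.1 ^ 3 + 27 * p.2 ^ 2 ≠ 0) with hokF
    set badF := boxF.filter (fun p : ℤ×ℤ => ¬ (4 * p.1 ^ 3 + 27 * p.2 ^ 2 ≠ 0)) with hbadF
    have hMc : (Mc X : ℝ) = (okF.card : ℝ) := by
      rw [Mc, Nat.card_coe_set_eq, okSet_eq_finset X hX, Set.ncard_coe_finset]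
    have hsum : okF.card + badF.card = boxF.card :=
      Finset.card_filter_add_card_filter_not _
    have hboxcard : (boxF.card : ℝ) = (2*(a:ℝ)+1) * (2*(b:ℝ)+1) := by
      rw [hboxF, Finset.card_product]
      push_cast
      rw [hcardA, hcardB]
    -- bad bound
    have hbad : (badF.card : ℝ) ≤ 2*(b:ℝ)+1 := by
      rw [← hcardB]
      have : badF.card ≤ (Finset.Icc (-b) b).card := by
        refine Finset.card_le_card_of_injOn Prod.snd (fun p hp => ?_) ?_
        · simp only [Finset.mem_coe, hbadF, Finset.mem_filter, hboxF, Finset.mem_product] at hp ⊢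
          exact hp.1.2
        · intro p hp q hq hpq
          simp only [hbadF, Finset.coe_filter, Set.mem_setOf_eq, not_not] at hp hq
          have hp2 := hp.2; have hq2 := hq.2
          have hcube : p.1^3 = q.1^3 := by
            have : (4:ℤ) * p.1^3 = 4 * q.1^3 := by
              rw [hpq] at hp2; linarith
            linarith
          have h1 : p.1 = q.1 := by nlinarith [sq_nonneg (p.1-q.1), sq_nonneg (p.1+q.1)]
          exact Prod.ext h1 hpq
      exact_mod_cast this
    -- assemble
    have hok : (okF.card : ℝ) = (boxF.card : ℝ) - (badF.card : ℝ) := by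
      have : (okF.card : ℝ) + (badF.card : ℝ) = (boxF.card : ℝ) := by exact_mod_cast hsum
      linarith
    rw [hMc, hok, hboxcard, ← hab, show (1:ℝ)/2 = (2:ℝ)⁻¹ by norm_num, ← hβ]
    have hbadnn : (0:ℝ) ≤ (badF.card : ℝ) := by positivity
    have hα1 : 1 ≤ α := Real.one_le_rpow hX1 (by norm_num)
    set P : ℝ := 2*(a:ℝ)+1 with hP
    set Q : ℝ := 2*(b:ℝ)+1 with hQ
    have hPl : 2*α - 1 ≤ P := by rw [hP]; have := haR.1; linarith
    have hPu : P ≤ 2*α + 1 := by rw [hP]; have := haR.2; linarith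
    have hQl : 2*β - 1 ≤ Q := by rw [hQ]; have := hbR.1; linarith
    have hQu : Q ≤ 2*β + 1 := by rw [hQ]; have := hbR.2; linarith
    have hPpos : 0 ≤ P := by linarith
    have hQlpos : (0:ℝ) ≤ 2*β - 1 := by linarith
    have hup : P * Q ≤ (2*α+1) * (2*β+1) :=
      mul_le_mul hPu hQu (by linarith) (by linarith)
    have hlo : (2*α-1) * (2*β-1) ≤ P * Q :=
      mul_le_mul hPl hQl hQlpos (by linarith)
    rw [abs_le]
    constructor
    · nlinarith
    · nlinarith

lemma val_step {d e : ℕ} (m : ℕ) (hm : m ≠ 0) {A₀ A₁ : ℤ} (hd : d ≠ 0)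
    (heq : (d:ℤ)^m * A₀ = (e:ℤ)^m * A₁) {p : ℕ} (pp : p.Prime)
    (hp : d.factorization p < e.factorization p) : (p:ℤ)^m ∣ A₀ := by
  rcases eq_or_ne A₀ 0 with rfl | hA0
  · exact dvd_zero _
  have he : e ≠ 0 := by rintro rfl; simp at hp
  have hA1 : A₁ ≠ 0 := by
    intro h
    rw [h, mul_zero] at heq
    exact absurd heq (by
      refine mul_ne_zero ?_ hA0
      exact pow_ne_zero _ (by exact_mod_cast hd))
  have hnat : d^m * A₀.natAbs = e^m * A₁.natAbs := by
    have := congrArg Int.natAbs heq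
    simpa [Int.natAbs_mul, Int.natAbs_pow] using this
  have h0 : A₀.natAbs ≠ 0 := Int.natAbs_ne_zero.mpr hA0
  have h1 : A₁.natAbs ≠ 0 := Int.natAbs_ne_zero.mpr hA1
  have hfact := congrArg (fun n : ℕ => n.factorization p) hnat
  simp only [Nat.factorization_mul (pow_ne_zero m hd) h0,
    Nat.factorization_mul (pow_ne_zero m he) h1, Nat.factorization_pow,
    Finsupp.add_apply, Finsupp.smul_apply, smul_eq_mul] at hfact
  have hle : m * (d.factorization p + 1) ≤ m * e.factorization p :=
    Nat.mul_le_mul_left m hp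
  rw [Nat.mul_add, Nat.mul_one] at hle
  have hv : m ≤ A₀.natAbs.factorization p := by omega
  have : p ^ m ∣ A₀.natAbs := (Nat.Prime.pow_dvd_iff_le_factorization pp h0).mpr hv
  have : ((p ^ m : ℕ) : ℤ) ∣ A₀ := Int.dvd_natAbs.mp (Int.ofNat_dvd_right.mpr this)
  exact_mod_cast this

lemma dvd_of_factorization_le {d e : ℕ} (hd : d ≠ 0) (he : e ≠ 0)
    (h : ∀ p : ℕ, p.Prime → e.factorization p ≤ d.factorization p) : e ∣ d := by
  refine (Nat.factorization_le_iff_dvd he hd).mp (Finsupp.le_def.mpr fun p => ?_)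
  by_cases hp : p.Prime
  · exact h p hp
  · simp [Nat.factorization_eq_zero_of_not_prime _ hp]

lemma decomp_unique {d e : ℕ} (hd : 0 < d) (he : 0 < e) {A₀ B₀ A₁ B₁ : ℤ}
    (h0 : WeaklyMinimal A₀ B₀) (h1 : WeaklyMinimal A₁ B₁)
    (hA : (d:ℤ)^4 * A₀ = (e:ℤ)^4 * A₁) (hB : (d:ℤ)^6 * B₀ = (e:ℤ)^6 * B₁) : d = e := by
  have hde : e ∣ d := by
    refine dvd_of_factorization_le (by omega) (by omega) fun p pp => ?_
    by_contra hlt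
    push_neg at hlt
    exact h0 p pp ⟨val_step 4 (by norm_num) (by omega) hA pp hlt,
      val_step 6 (by norm_num) (by omega) hB pp hlt⟩
  have hed : d ∣ e := by
    refine dvd_of_factorization_le (by omega) (by omega) fun p pp => ?_
    by_contra hlt
    push_neg at hlt
    exact h1 p pp ⟨val_step 4 (by norm_num) (by omega) hA.symm pp hlt,
      val_step 6 (by norm_num) (by omega) hB.symm pp hlt⟩
  exact Nat.dvd_antisymm hed hde

lemma decomp_exists {A B : ℤ} (h : ¬(A = 0 ∧ B = 0)) :
    ∃ d : ℕ, 0 < d ∧ ∃ A₀ B₀ : ℤ, WeaklyMinimal A₀ B₀ ∧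
      A = (d:ℤ)^4 * A₀ ∧ B = (d:ℤ)^6 * B₀ := by
  classical
  set P : ℕ → Prop := fun k => (k:ℤ)^4 ∣ A ∧ (k:ℤ)^6 ∣ B with hPdef
  set bnd : ℕ := A.natAbs + B.natAbs with hbnddef
  have hbnd : ∀ k, P k → k ≤ bnd := by
    intro k hk
    rcases not_and_or.mp h with hA | hB
    · have h4 : k^4 ∣ A.natAbs := by
        have := hk.1
        exact Int.ofNat_dvd_right.mp (Int.dvd_natAbs.mpr (by exact_mod_cast this))
      have hk4 : k^4 ≤ A.natAbs := Nat.le_of_dvd (Int.natAbs_pos.mpr hA) h4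
      calc k ≤ k^4 := Nat.le_self_pow (by norm_num) k
        _ ≤ A.natAbs := hk4
        _ ≤ bnd := by omega
    · have h6 : k^6 ∣ B.natAbs := by
        have := hk.2
        exact Int.ofNat_dvd_right.mp (Int.dvd_natAbs.mpr (by exact_mod_cast this))
      have hk6 : k^6 ≤ B.natAbs := Nat.le_of_dvd (Int.natAbs_pos.mpr hB) h6
      calc k ≤ k^6 := Nat.le_self_pow (by norm_num) k
        _ ≤ B.natAbs := hk6
        _ ≤ bnd := by omega
  have hP1 : P 1 := ⟨by simp, by simp⟩
  have h1bnd : 1 ≤ bnd := hbnd 1 hP1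
  set g : ℕ := Nat.findGreatest P bnd with hgdef
  have hg1 : 1 ≤ g := Nat.le_findGreatest h1bnd hP1
  have hgP : P g := Nat.findGreatest_spec h1bnd hP1
  obtain ⟨A₀, hA₀⟩ := hgP.1
  obtain ⟨B₀, hB₀⟩ := hgP.2
  refine ⟨g, hg1, A₀, B₀, ?_, hA₀, hB₀⟩
  intro p pp hpc
  obtain ⟨hp4, hp6⟩ := hpc
  have hPgp : P (g * p) := by
    constructor
    · rw [hA₀]
      push_cast [mul_pow]
      exact mul_dvd_mul_left _ hp4
    · rw [hB₀]
      push_cast [mul_pow]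
      exact mul_dvd_mul_left _ hp6
  have hle : g * p ≤ bnd := hbnd _ hPgp
  have hlt : g < g * p := by
    have := pp.two_le
    calc g = g * 1 := (mul_one g).symm
      _ < g * p := by
          have h2 := pp.two_le
          exact Nat.mul_lt_mul_of_le_of_lt (le_refl g) (by omega) (by omega)
  exact Nat.findGreatest_is_greatest hlt hle hPgp

lemma mul_max_nonneg (c x y : ℝ) (h : 0 ≤ c) : c * max x y = max (c*x) (c*y) := by
  rcases le_total x y with h' | h'
  · rw [max_eq_right h', max_eq_right (by nlinarith)]
  · rw [max_eq_left h', max_eq_left (by nlinarith)]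

lemma height_scale (d : ℕ) (A B : ℤ) :
    max ((((d:ℤ)^6 * B : ℤ) : ℝ)^2) (|(((d:ℤ)^4 * A : ℤ) : ℝ)|^3)
      = ((d:ℝ))^12 * max ((B:ℝ)^2) (|(A:ℝ)|^3) := by
  push_cast
  rw [show ((d:ℝ)^6*(B:ℝ))^2 = (d:ℝ)^12 * (B:ℝ)^2 from by ring,
    show |(d:ℝ)^4*(A:ℝ)|^3 = (d:ℝ)^12 * |(A:ℝ)|^3 from by
      rw [abs_mul, mul_pow, abs_pow, abs_of_nonneg (by positivity : (0:ℝ) ≤ (d:ℝ))]; ring]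
  exact (mul_max_nonneg _ _ _ (by positivity)).symm

lemma one_le_height {A B : ℤ} (h : ¬(A = 0 ∧ B = 0)) :
    (1:ℝ) ≤ max ((B:ℝ)^2) (|(A:ℝ)|^3) := by
  rcases not_and_or.mp h with hA | hB
  · refine le_max_of_le_right ?_
    have h1 : (1:ℤ) ≤ |A| := Int.one_le_abs hA
    have h2 : (1:ℝ) ≤ ((|A|:ℤ):ℝ) := by exact_mod_cast h1
    rw [Int.cast_abs] at h2
    exact one_le_pow₀ h2
  · refine le_max_of_le_left ?_
    have h1 : (1:ℤ) ≤ |B| := Int.one_le_abs hB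
    have h2 : (1:ℝ) ≤ ((|B|:ℤ):ℝ) := by exact_mod_cast h1
    have h2' : (1:ℝ) ≤ |(B:ℝ)| := by rw [← Int.cast_abs]; exact_mod_cast h1
    rw [← sq_abs]
    nlinarith [abs_nonneg ((B:ℝ))]

lemma psi_inj (d : ℕ) (hd : 0 < d) :
    Function.Injective (fun p : ℤ×ℤ => ((d:ℤ)^4 * p.1, (d:ℤ)^6 * p.2)) := by
  intro p q h
  simp only [Prod.mk.injEq] at h
  have hd4 : ((d:ℤ))^4 ≠ 0 := pow_ne_zero _ (by exact_mod_cast hd.ne')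
  have hd6 : ((d:ℤ))^6 ≠ 0 := pow_ne_zero _ (by exact_mod_cast hd.ne')
  exact Prod.ext (mul_left_cancel₀ hd4 h.1) (mul_left_cancel₀ hd6 h.2)

lemma M_eq_sum (X : ℝ) (hX0 : 0 < X) (T : ℕ) (hXT : X ≤ T) :
    Mc X = ∑ d ∈ Icc 1 T, Nc (X / (d:ℝ)^12) := by
  classical
  set ψ : ℕ → ℤ×ℤ → ℤ×ℤ := fun d p => ((d:ℤ)^4 * p.1, (d:ℤ)^6 * p.2) with hψ
  set Fd : ℕ → Finset (ℤ×ℤ) :=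
    fun d => ((minSet_finite (X/(d:ℝ)^12)).toFinset).image (ψ d) with hFd
  have hpart : (okSet_finite X).toFinset = (Icc 1 T).biUnion Fd := by
    ext q
    simp only [Set.Finite.mem_toFinset, Finset.mem_biUnion, Finset.mem_Icc, hFd,
      Finset.mem_image]
    constructor
    · intro hq
      obtain ⟨hΔ, hht⟩ := hq
      have hne : ¬(q.1 = 0 ∧ q.2 = 0) := by
        rintro ⟨h1, h2⟩; rw [h1, h2] at hΔ; simp at hΔ
      obtain ⟨d, hd1, A₀, B₀, hmin, hA, hB⟩ := decomp_exists hne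
      have hd0 : (1:ℝ) ≤ (d:ℝ) := by exact_mod_cast hd1
      have hΔ0 : 4*A₀^3 + 27*B₀^2 ≠ 0 := by
        intro h0
        apply hΔ
        rw [hA, hB]
        have : 4*((d:ℤ)^4*A₀)^3 + 27*((d:ℤ)^6*B₀)^2 = (d:ℤ)^12 * (4*A₀^3 + 27*B₀^2) := by ring
        rw [this, h0, mul_zero]
      have hne0 : ¬(A₀ = 0 ∧ B₀ = 0) := by
        rintro ⟨h1, h2⟩
        rw [h1, h2] at hΔ0; simp at hΔ0
      have hhq : max ((q.2:ℝ)^2) (|(q.1:ℝ)|^3) = (d:ℝ)^12 * max ((B₀:ℝ)^2) (|(A₀:ℝ)|^3) := by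
        conv_lhs => rw [hA, hB]
        exact height_scale d A₀ B₀
      rw [hhq] at hht
      have h1le := one_le_height hne0
      have hd12 : (0:ℝ) < (d:ℝ)^12 := by positivity
      have hlt : max ((B₀:ℝ)^2) (|(A₀:ℝ)|^3) < X / (d:ℝ)^12 := by
        rw [lt_div_iff₀ hd12]
        calc max ((B₀:ℝ)^2) (|(A₀:ℝ)|^3) * (d:ℝ)^12
            = (d:ℝ)^12 * max ((B₀:ℝ)^2) (|(A₀:ℝ)|^3) := by ring
          _ < X := hht
      have hdT : d ≤ T := by
        have h12 : (d:ℝ)^12 ≤ (d:ℝ)^12 * max ((B₀:ℝ)^2) (|(A₀:ℝ)|^3) :=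
          le_mul_of_one_le_right (by positivity) h1le
        have hdX : (d:ℝ)^12 < X := lt_of_le_of_lt h12 hht
        have hdd : (d:ℝ) ≤ (d:ℝ)^12 := le_self_pow₀ hd0 (by norm_num)
        have : (d:ℝ) < (T:ℝ) := by linarith [hXT]
        exact_mod_cast this.le
      refine ⟨d, ⟨hd1, hdT⟩, (A₀, B₀), ?_, ?_⟩
      · simp only [minSet, Set.mem_setOf_eq]
        exact ⟨hmin, hΔ0, hlt⟩
      · exact Prod.ext hA.symm hB.symm
    · rintro ⟨d, ⟨hd1, hdT⟩, p, hp, rfl⟩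
      simp only [minSet, Set.mem_setOf_eq] at hp
      obtain ⟨hmin, hΔ0, hlt⟩ := hp
      have hd12 : (0:ℝ) < (d:ℝ)^12 := by positivity
      constructor
      · have : 4*((d:ℤ)^4*p.1)^3 + 27*((d:ℤ)^6*p.2)^2 = (d:ℤ)^12 * (4*p.1^3 + 27*p.2^2) := by
          ring
        show 4*((d:ℤ)^4*p.1)^3 + 27*((d:ℤ)^6*p.2)^2 ≠ 0
        rw [this]
        exact mul_ne_zero (pow_ne_zero _ (by exact_mod_cast (by omega : d ≠ 0))) hΔ0
      · show max (((((d:ℤ)^6 * p.2 : ℤ)):ℝ)^2) (|(((d:ℤ)^4 * p.1 : ℤ):ℝ)|^3) < X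
        rw [height_scale d p.1 p.2]
        calc (d:ℝ)^12 * max ((p.2:ℝ)^2) (|(p.1:ℝ)|^3)
            < (d:ℝ)^12 * (X / (d:ℝ)^12) := by
              exact mul_lt_mul_of_pos_left hlt hd12
          _ = X := by field_simp
  have hdisj : ∀ d ∈ Icc 1 T, ∀ e ∈ Icc 1 T, d ≠ e → Disjoint (Fd d) (Fd e) := by
    intro d hd e he hne
    rw [Finset.disjoint_left]
    intro q hqd hqe
    rw [hFd, Finset.mem_image] at hqd hqe
    obtain ⟨p, hp, hpq⟩ := hqd
    obtain ⟨p', hp', hpq'⟩ := hqe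
    rw [Set.Finite.mem_toFinset] at hp hp'
    have hd1 : 0 < d := (Finset.mem_Icc.mp hd).1
    have he1 : 0 < e := (Finset.mem_Icc.mp he).1
    have heq : ψ d p = ψ e p' := hpq.trans hpq'.symm
    simp only [hψ, Prod.mk.injEq] at heq
    exact hne (decomp_unique hd1 he1 hp.1 hp'.1 heq.1 heq.2)
  have hMc : Mc X = ((okSet_finite X).toFinset).card := by
    rw [Mc, Nat.card_coe_set_eq, Set.ncard_eq_toFinset_card _ (okSet_finite X)]
  rw [hMc, hpart, Finset.card_biUnion hdisj]
  refine Finset.sum_congr rfl fun d hd => ?_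
  have hd1 : 0 < d := (Finset.mem_Icc.mp hd).1
  rw [hFd]
  rw [Finset.card_image_of_injective _ (psi_inj d hd1)]
  rw [Nc, Nat.card_coe_set_eq, Set.ncard_eq_toFinset_card _ (minSet_finite _)]

lemma sum_antidiag_moebius (n : ℕ) (hn : n ≠ 0) :
    ∑ q ∈ n.divisorsAntidiagonal, (moebius q.1 : ℤ) = if n = 1 then 1 else 0 := by
  have h := congrArg (fun f : ArithmeticFunction ℤ => f n) moebius_mul_coe_zeta
  simp only [mul_apply, one_apply] at h
  rw [← h]
  refine Finset.sum_congr rfl fun q hq => ?_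
  have hq2 : q.2 ≠ 0 := by
    rw [Nat.mem_divisorsAntidiagonal] at hq
    intro h0
    exact hq.2 (by rw [← hq.1, h0, mul_zero])
  simp [intCoe_apply, zeta_apply, hq2]

lemma moebius_inv_sum (c : ℕ → ℤ) (T : ℕ) (hT : 1 ≤ T) (hc : ∀ n, T < n → c n = 0)
    (M : ℕ → ℤ) (hM : ∀ d, 1 ≤ d → d ≤ T → M d = ∑ e ∈ Icc 1 T, c (d * e)) :
    ∑ d ∈ Icc 1 T, (moebius d : ℤ) * M d = c 1 := by
  classical
  have step1 : ∑ d ∈ Icc 1 T, (moebius d : ℤ) * M d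
      = ∑ q ∈ (Icc 1 T) ×ˢ (Icc 1 T), (moebius q.1 : ℤ) * c (q.1 * q.2) := by
    rw [Finset.sum_product]
    refine Finset.sum_congr rfl fun d hd => ?_
    rw [Finset.mem_Icc] at hd
    rw [hM d hd.1 hd.2, Finset.mul_sum]
  set s' := ((Icc 1 T) ×ˢ (Icc 1 T)).filter (fun q : ℕ × ℕ => q.1 * q.2 ≤ T) with hs'
  have step2 : ∑ q ∈ (Icc 1 T) ×ˢ (Icc 1 T), (moebius q.1 : ℤ) * c (q.1 * q.2)
      = ∑ q ∈ s', (moebius q.1 : ℤ) * c (q.1 * q.2) := by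
    refine (Finset.sum_subset (Finset.filter_subset _ _) fun q hq hq' => ?_).symm
    rw [Finset.mem_filter] at hq'
    have : T < q.1 * q.2 := by
      rcases Nat.lt_or_ge T (q.1 * q.2) with h | h
      · exact h
      · exact absurd ⟨hq, h⟩ hq'
    rw [hc _ this, mul_zero]
  have step3 : s' = (Icc 1 T).biUnion (fun n => n.divisorsAntidiagonal) := by
    ext q
    simp only [hs', Finset.mem_filter, Finset.mem_product, Finset.mem_Icc,
      Finset.mem_biUnion, Nat.mem_divisorsAntidiagonal]
    constructor
    · rintro ⟨⟨⟨h1, h2⟩, ⟨h3, h4⟩⟩, h5⟩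
      exact ⟨q.1 * q.2, ⟨Nat.one_le_iff_ne_zero.mpr (by positivity), h5⟩, rfl, by positivity⟩
    · rintro ⟨n, ⟨hn1, hn2⟩, hq, hn0⟩
      have h1 : 1 ≤ q.1 := by
        rcases Nat.eq_zero_or_pos q.1 with h | h
        · rw [h, zero_mul] at hq; omega
        · exact h
      have h2 : 1 ≤ q.2 := by
        rcases Nat.eq_zero_or_pos q.2 with h | h
        · rw [h, mul_zero] at hq; omega
        · exact h
      have hq1T : q.1 ≤ T := le_trans (Nat.le_mul_of_pos_right _ h2) (hq ▸ hn2)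
      have hq2T : q.2 ≤ T := le_trans (Nat.le_mul_of_pos_left _ h1) (hq ▸ hn2)
      exact ⟨⟨⟨h1, hq1T⟩, ⟨h2, hq2T⟩⟩, hq ▸ hn2⟩
  have hdisj : ∀ x ∈ Icc 1 T, ∀ y ∈ Icc 1 T, x ≠ y →
      Disjoint (Nat.divisorsAntidiagonal x) (Nat.divisorsAntidiagonal y) := by
    intro x hx y hy hxy
    rw [Finset.disjoint_left]
    intro q hqx hqy
    rw [Nat.mem_divisorsAntidiagonal] at hqx hqy
    exact hxy (hqx.1.symm.trans hqy.1)
  have step4 : ∑ q ∈ s', (moebius q.1 : ℤ) * c (q.1 * q.2)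
      = ∑ n ∈ Icc 1 T, ∑ q ∈ n.divisorsAntidiagonal, (moebius q.1 : ℤ) * c (q.1 * q.2) := by
    rw [step3, Finset.sum_biUnion hdisj]
  have step5 : ∀ n ∈ Icc 1 T, ∑ q ∈ n.divisorsAntidiagonal, (moebius q.1 : ℤ) * c (q.1 * q.2)
      = (if n = 1 then 1 else 0) * c n := by
    intro n hn
    rw [Finset.mem_Icc] at hn
    rw [← sum_antidiag_moebius n (by omega), Finset.sum_mul]
    refine Finset.sum_congr rfl fun q hq => ?_
    rw [Nat.mem_divisorsAntidiagonal] at hq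
    rw [hq.1]
  rw [step1, step2, step4, Finset.sum_congr rfl step5]
  rw [Finset.sum_eq_single 1 (fun n _ hn1 => by rw [if_neg hn1, zero_mul])
    (fun h => absurd (Finset.mem_Icc.mpr ⟨le_refl 1, hT⟩) h)]
  rw [if_pos rfl, one_mul]

lemma aux_rpow (d : ℕ) (hd : 1 ≤ d) {X : ℝ} (hX : 0 < X) :
    (X / (d:ℝ)^12) ^ ((5:ℝ)/6) = X^((5:ℝ)/6) / (d:ℝ)^10 ∧
    (X / (d:ℝ)^12) ^ ((1:ℝ)/2) = X^((1:ℝ)/2) / (d:ℝ)^6 := by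
  have hd0 : (0:ℝ) < (d:ℝ) := by exact_mod_cast hd
  have hbase : ∀ r : ℝ, ((d:ℝ)^(12:ℕ)) ^ r = (d:ℝ) ^ (12 * r) := by
    intro r
    rw [← Real.rpow_natCast (d:ℝ) 12, ← Real.rpow_mul hd0.le]
    norm_num
  constructor
  · rw [Real.div_rpow hX.le (by positivity), hbase]
    norm_num
  · rw [Real.div_rpow hX.le (by positivity), hbase]
    norm_num


/-- The number of elliptic curves over `ℚ` of naive height less than `X`, counted via
weakly minimal Weierstrass data `(A, B)` with `4A³ + 27B² ≠ 0` and
`max(B², |A|³) < X`, is `4ζ(10)^{-1}X^{5/6} + O(X^{1/2})`. -/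
theorem count_bounded_naive_height :
    ∃ K : ℝ, 0 < K ∧ ∀ X : ℝ, 1 ≤ X →
      |(Nat.card {p : ℤ × ℤ | WeaklyMinimal p.1 p.2 ∧
          4 * p.1 ^ 3 + 27 * p.2 ^ 2 ≠ 0 ∧
          max ((p.2 : ℝ) ^ 2) (|(p.1 : ℝ)| ^ 3) < X} : ℝ)
        - 4 * zetaTen⁻¹ * X ^ ((5 : ℝ) / 6)|
      ≤ K * X ^ ((1 : ℝ) / 2) := by
  refine ⟨100, by norm_num, fun X hX1 => ?_⟩
  have hX0 : (0:ℝ) < X := by linarith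
  have hset : (Nat.card {p : ℤ × ℤ | WeaklyMinimal p.1 p.2 ∧
      4 * p.1 ^ 3 + 27 * p.2 ^ 2 ≠ 0 ∧
      max ((p.2 : ℝ) ^ 2) (|(p.1 : ℝ)| ^ 3) < X}) = Nc X := rfl
  rw [hset]
  set T : ℕ := ⌈X⌉₊ with hTdef
  have hXT : X ≤ (T:ℝ) := Nat.le_ceil X
  have hT1 : 1 ≤ T := by
    rw [hTdef]
    exact_mod_cast Nat.one_le_ceil_iff.mpr hX0
  set c : ℕ → ℤ := fun n => (Nc (X/(n:ℝ)^12) : ℤ) with hcdef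
  have hc : ∀ n, T < n → c n = 0 := by
    intro n hn
    have hn1 : (1:ℝ) ≤ (n:ℝ) := by exact_mod_cast (by omega : 1 ≤ n)
    have h12 : (n:ℝ) ≤ (n:ℝ)^12 := le_self_pow₀ hn1 (by norm_num)
    have hTn : (T:ℝ) < (n:ℝ) := by exact_mod_cast hn
    have hle : X / (n:ℝ)^12 ≤ 1 := by
      rw [div_le_one (by positivity)]
      linarith
    have : Nc (X/(n:ℝ)^12) = 0 := by
      rw [Nc, minSet_empty hle]
      simp
    rw [hcdef]
    simp only [this, Nat.cast_zero]
  set MM : ℕ → ℤ := fun d => (Mc (X/(d:ℝ)^12) : ℤ) with hMdef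
  have hM : ∀ d, 1 ≤ d → d ≤ T → MM d = ∑ e ∈ Icc 1 T, c (d * e) := by
    intro d hd1 hdT
    have hd0 : (1:ℝ) ≤ (d:ℝ) := by exact_mod_cast hd1
    have hpos : (0:ℝ) < X / (d:ℝ)^12 := by positivity
    have hle : X / (d:ℝ)^12 ≤ (T:ℝ) := by
      calc X / (d:ℝ)^12 ≤ X / 1 := by
            refine div_le_div_of_nonneg_left hX0.le (by norm_num) (one_le_pow₀ hd0)
        _ = X := div_one X
        _ ≤ (T:ℝ) := hXT
    have := M_eq_sum (X / (d:ℝ)^12) hpos T hle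
    rw [hMdef]
    simp only []
    rw [this]
    push_cast
    refine Finset.sum_congr rfl fun e he => ?_
    rw [hcdef]
    simp only []
    congr 2
    push_cast
    rw [div_div, mul_pow]
  have key := moebius_inv_sum c T hT1 hc MM hM
  have hc1 : c 1 = (Nc X : ℤ) := by
    rw [hcdef]
    simp only []
    norm_num
  rw [hc1] at key
  -- real version
  have keyR : (Nc X : ℝ) = ∑ d ∈ Icc 1 T, (moebius d : ℝ) * (Mc (X/(d:ℝ)^12) : ℝ) := by
    have := congrArg (fun z : ℤ => (z:ℝ)) key.symm
    push_cast at this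
    convert this using 1
    simp [hMdef]
  -- decompose
  have hmu1 : ∀ d : ℕ, |(moebius d : ℝ)| ≤ 1 := by
    intro d
    have := abs_moebius_le_one (n := d)
    exact_mod_cast this
  set E1 : ℝ := ∑ d ∈ Icc 1 T, (moebius d : ℝ) *
    ((Mc (X/(d:ℝ)^12) : ℝ) - 4 * (X/(d:ℝ)^12) ^ ((5:ℝ)/6)) with hE1def
  set S10 : ℝ := ∑ d ∈ Icc 1 T, (moebius d : ℝ) / (d : ℝ) ^ 10 with hS10def
  have hsplit : (Nc X : ℝ) - 4 * zetaTen⁻¹ * X ^ ((5:ℝ)/6)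
      = E1 + 4 * X ^ ((5:ℝ)/6) * (S10 - zetaTen⁻¹) := by
    rw [keyR, hE1def, hS10def]
    have hterm : ∀ d ∈ Icc 1 T, (moebius d : ℝ) * (Mc (X/(d:ℝ)^12) : ℝ)
        = (moebius d : ℝ) * ((Mc (X/(d:ℝ)^12) : ℝ) - 4 * (X/(d:ℝ)^12) ^ ((5:ℝ)/6))
          + 4 * X ^ ((5:ℝ)/6) * ((moebius d : ℝ) / (d : ℝ) ^ 10) := by
      intro d hd
      have hd1 : 1 ≤ d := (Finset.mem_Icc.mp hd).1
      have hd0 : (0:ℝ) < (d:ℝ) := by exact_mod_cast hd1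
      rw [(aux_rpow d hd1 hX0).1]
      field_simp
      ring
    rw [Finset.sum_congr rfl hterm, Finset.sum_add_distrib, ← Finset.mul_sum]
    ring
  have hE1 : |E1| ≤ 16 * X ^ ((1:ℝ)/2) := by
    rw [hE1def]
    calc |∑ d ∈ Icc 1 T, (moebius d : ℝ) *
        ((Mc (X/(d:ℝ)^12) : ℝ) - 4 * (X/(d:ℝ)^12) ^ ((5:ℝ)/6))|
        ≤ ∑ d ∈ Icc 1 T, |(moebius d : ℝ) *
          ((Mc (X/(d:ℝ)^12) : ℝ) - 4 * (X/(d:ℝ)^12) ^ ((5:ℝ)/6))| :=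
          Finset.abs_sum_le_sum_abs _ _
      _ ≤ ∑ d ∈ Icc 1 T, 8 * X ^ ((1:ℝ)/2) * ((d:ℝ)^6)⁻¹ := by
          refine Finset.sum_le_sum fun d hd => ?_
          have hd1 : 1 ≤ d := (Finset.mem_Icc.mp hd).1
          have hd0 : (1:ℝ) ≤ (d:ℝ) := by exact_mod_cast hd1
          have hpos : (0:ℝ) < X / (d:ℝ)^12 := by positivity
          rw [abs_mul]
          have h1 := M_approx (X / (d:ℝ)^12) hpos
          rw [(aux_rpow d hd1 hX0).2] at h1
          calc |(moebius d : ℝ)| * |(Mc (X/(d:ℝ)^12) : ℝ) - 4 * (X/(d:ℝ)^12) ^ ((5:ℝ)/6)|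
              ≤ 1 * (8 * (X ^ ((1:ℝ)/2) / (d:ℝ)^6)) :=
              mul_le_mul (hmu1 d) h1 (abs_nonneg _) (by norm_num)
            _ = 8 * X ^ ((1:ℝ)/2) * ((d:ℝ)^6)⁻¹ := by field_simp
      _ = 8 * X ^ ((1:ℝ)/2) * ∑ d ∈ Icc 1 T, ((d:ℝ)^6)⁻¹ := by rw [← Finset.mul_sum]
      _ ≤ 8 * X ^ ((1:ℝ)/2) * 2 := by
          refine mul_le_mul_of_nonneg_left (sum_Icc_inv6 T) (by positivity)
      _ = 16 * X ^ ((1:ℝ)/2) := by ring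
  have hE2 : |4 * X ^ ((5:ℝ)/6) * (S10 - zetaTen⁻¹)| ≤ 8 * X ^ ((1:ℝ)/2) := by
    rw [abs_mul, abs_of_nonneg (by positivity : (0:ℝ) ≤ 4 * X ^ ((5:ℝ)/6))]
    have h1 := mu_tail T hT1
    have h56 : X ^ ((5:ℝ)/6) ≤ X := by
      have := Real.rpow_le_rpow_of_exponent_le hX1 (by norm_num : (5:ℝ)/6 ≤ 1)
      rwa [Real.rpow_one] at this
    have hT8 : X ≤ ((T:ℝ)+1)^8 := by
      have h2 : (T:ℝ)+1 ≤ ((T:ℝ)+1)^8 := le_self_pow₀ (by linarith [hXT]) (by norm_num)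
      linarith
    have h3 : 2 / ((T:ℝ)+1)^8 ≤ 2 / X := by
      refine div_le_div_of_nonneg_left (by norm_num) hX0 hT8
    have h4 : |S10 - zetaTen⁻¹| ≤ 2 / X := le_trans h1 h3
    calc 4 * X ^ ((5:ℝ)/6) * |S10 - zetaTen⁻¹| ≤ 4 * X ^ ((5:ℝ)/6) * (2 / X) :=
          mul_le_mul_of_nonneg_left h4 (by positivity)
      _ = 8 * (X ^ ((5:ℝ)/6) / X) := by ring
      _ ≤ 8 * 1 := by
          refine mul_le_mul_of_nonneg_left ?_ (by norm_num)
          rw [div_le_one hX0]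
          exact h56
      _ ≤ 8 * X ^ ((1:ℝ)/2) := by
          have := Real.one_le_rpow hX1 (by norm_num : (0:ℝ) ≤ 1/2)
          linarith
  calc |(Nc X : ℝ) - 4 * zetaTen⁻¹ * X ^ ((5:ℝ)/6)|
      = |E1 + 4 * X ^ ((5:ℝ)/6) * (S10 - zetaTen⁻¹)| := by rw [hsplit]
    _ ≤ |E1| + |4 * X ^ ((5:ℝ)/6) * (S10 - zetaTen⁻¹)| := abs_add_le _ _
    _ ≤ 16 * X ^ ((1:ℝ)/2) + 8 * X ^ ((1:ℝ)/2) := add_le_add hE1 hE2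
    _ ≤ 100 * X ^ ((1:ℝ)/2) := by
        have : (0:ℝ) ≤ X ^ ((1:ℝ)/2) := by positivity
        linarith
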